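/- The map φ preserves the log-canonical Poisson structure: writing φ = (φ₁,φ₂,φ₃,φ₄), at every point x = (q₁,p₁,q₂,p₂) ∈ ℂ⁴ with q₁p₁q₂p₂ ≠ 0 one has {φ₁,φ₂}(x) = −φ₁(x)·φ₂(x), {φ₃,φ₄}(x) = −φ₃(x)·φ₄(x), and {φ₁,φ₃}(x) = {φ₁,φ₄}(x) = {φ₂,φ₃}(x) = {φ₂,φ₄}(x) = 0; that is, the components of φ satisfy the same bracket relations as the coordinate functions (for which {q₁,p₁} = −q₁p₁, {q₂,p₂} = −q₂p₂, and all other coordinate brackets vanish), so φ preserves the symplectic form ω = dq₁∧dp₁/(q₁p₁) + dq₂∧dp₂/(q₂p₂). -/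

import Mathlib

/-- The map φ(q₁,p₁,q₂,p₂) = ((1+b·q₂)/(q₁q₂p₂), q₂, (1+b·q₁)/(q₁p₁q₂), q₁). -/
noncomputable def phi (b : ℂ) : ℂ × ℂ × ℂ × ℂ → ℂ × ℂ × ℂ × ℂ :=
  fun x => ((1 + b * x.2.2.1) / (x.1 * x.2.2.1 * x.2.2.2), x.2.2.1,
            (1 + b * x.1) / (x.1 * x.2.1 * x.2.2.1), x.1)


/-- Partial derivative with respect to the first coordinate q₁. -/
noncomputable def pdq1 (f : ℂ × ℂ × ℂ × ℂ → ℂ) (x : ℂ × ℂ × ℂ × ℂ) : ℂ :=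
  deriv (fun t => f (t, x.2.1, x.2.2.1, x.2.2.2)) x.1

/-- Partial derivative with respect to the second coordinate p₁. -/
noncomputable def pdp1 (f : ℂ × ℂ × ℂ × ℂ → ℂ) (x : ℂ × ℂ × ℂ × ℂ) : ℂ :=
  deriv (fun t => f (x.1, t, x.2.2.1, x.2.2.2)) x.2.1

/-- Partial derivative with respect to the third coordinate q₂. -/
noncomputable def pdq2 (f : ℂ × ℂ × ℂ × ℂ → ℂ) (x : ℂ × ℂ × ℂ × ℂ) : ℂ :=
  deriv (fun t => f (x.1, x.2.1, t, x.2.2.2)) x.2.2.1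

/-- Partial derivative with respect to the fourth coordinate p₂. -/
noncomputable def pdp2 (f : ℂ × ℂ × ℂ × ℂ → ℂ) (x : ℂ × ℂ × ℂ × ℂ) : ℂ :=
  deriv (fun t => f (x.1, x.2.1, x.2.2.1, t)) x.2.2.2

/-- The log-canonical Poisson bracket
{f,g} = q₁p₁(∂f/∂p₁·∂g/∂q₁ − ∂f/∂q₁·∂g/∂p₁) + q₂p₂(∂f/∂p₂·∂g/∂q₂ − ∂f/∂q₂·∂g/∂p₂). -/
noncomputable def pbracket (f g : ℂ × ℂ × ℂ × ℂ → ℂ) (x : ℂ × ℂ × ℂ × ℂ) : ℂ :=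
  x.1 * x.2.1 * (pdp1 f x * pdq1 g x - pdq1 f x * pdp1 g x)
    + x.2.2.1 * x.2.2.2 * (pdp2 f x * pdq2 g x - pdq2 f x * pdp2 g x)

/-- First component of φ. -/
noncomputable def phi1 (b : ℂ) (x : ℂ × ℂ × ℂ × ℂ) : ℂ :=
  (1 + b * x.2.2.1) / (x.1 * x.2.2.1 * x.2.2.2)

/-- Second component of φ. -/
def phi2 (x : ℂ × ℂ × ℂ × ℂ) : ℂ := x.2.2.1

/-- Third component of φ. -/
noncomputable def phi3 (b : ℂ) (x : ℂ × ℂ × ℂ × ℂ) : ℂ :=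
  (1 + b * x.1) / (x.1 * x.2.1 * x.2.2.1)

/-- Fourth component of φ. -/
def phi4 (x : ℂ × ℂ × ℂ × ℂ) : ℂ := x.1

/- STATEMENT 7: the components of φ satisfy the same log-canonical bracket relations as
the coordinates: {φ₁,φ₂} = −φ₁φ₂, {φ₃,φ₄} = −φ₃φ₄, all other brackets vanish;
hence φ preserves the symplectic form ω = dq₁∧dp₁/(q₁p₁) + dq₂∧dp₂/(q₂p₂). -/

lemma dlem (a c k t : ℂ) (hk : k ≠ 0) (ht : t ≠ 0) :
    deriv (fun s => (a + c * s) / (k * s)) t = -a / (k * t ^ 2) := by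
  have hkt : k * t ≠ 0 := mul_ne_zero hk ht
  rw [show (fun s => (a + c * s) / (k * s)) = (fun s => a + c * s) / (fun s => k * s) from rfl]
  rw [deriv_div (c := fun s => a + c * s) (d := fun s => k * s) (by fun_prop) (by fun_prop) hkt]
  have h1 : deriv (fun s => a + c * s) t = c := by
    simpa using (((hasDerivAt_id t).const_mul c).const_add a).deriv
  have h2 : deriv (fun s : ℂ => k * s) t = k := by
    simpa using ((hasDerivAt_id t).const_mul k).deriv
  rw [h1, h2]
  field_simp
  ring

theorem phi_preserves_log_canonical_structure (b : ℂ) (hb : b ≠ 0) (x : ℂ × ℂ × ℂ × ℂ)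
    (h : x.1 * x.2.1 * x.2.2.1 * x.2.2.2 ≠ 0) :
    pbracket (phi1 b) phi2 x = -(phi1 b x * phi2 x) ∧
    pbracket (phi3 b) phi4 x = -(phi3 b x * phi4 x) ∧
    pbracket (phi1 b) (phi3 b) x = 0 ∧
    pbracket (phi1 b) phi4 x = 0 ∧
    pbracket phi2 (phi3 b) x = 0 ∧
    pbracket phi2 phi4 x = 0 := by
  obtain ⟨q1, p1, q2, p2⟩ := x
  simp only at h ⊢
  have hq1 : q1 ≠ 0 := by intro h0; apply h; rw [h0]; ring
  have hp1 : p1 ≠ 0 := by intro h0; apply h; rw [h0]; ring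
  have hq2 : q2 ≠ 0 := by intro h0; apply h; rw [h0]; ring
  have hp2 : p2 ≠ 0 := by intro h0; apply h; rw [h0]; ring
  -- partials of phi1
  have e11 : pdq1 (phi1 b) (q1, p1, q2, p2) = -(1 + b * q2) / ((q2 * p2) * q1 ^ 2) := by
    simp only [pdq1, phi1]
    rw [show (fun t => (1 + b * q2) / (t * q2 * p2))
        = (fun t => ((1 + b * q2) + 0 * t) / ((q2 * p2) * t)) from funext fun t => by ring_nf]
    exact dlem _ _ _ _ (mul_ne_zero hq2 hp2) hq1
  have e12 : pdp1 (phi1 b) (q1, p1, q2, p2) = 0 := by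
    simp only [pdp1, phi1]; exact deriv_const _ _
  have e13 : pdq2 (phi1 b) (q1, p1, q2, p2) = -1 / ((q1 * p2) * q2 ^ 2) := by
    simp only [pdq2, phi1]
    rw [show (fun t => (1 + b * t) / (q1 * t * p2))
        = (fun t => (1 + b * t) / ((q1 * p2) * t)) from funext fun t => by ring_nf]
    exact dlem _ _ _ _ (mul_ne_zero hq1 hp2) hq2
  have e14 : pdp2 (phi1 b) (q1, p1, q2, p2) = -(1 + b * q2) / ((q1 * q2) * p2 ^ 2) := by
    simp only [pdp2, phi1]
    rw [show (fun t => (1 + b * q2) / (q1 * q2 * t))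
        = (fun t => ((1 + b * q2) + 0 * t) / ((q1 * q2) * t)) from funext fun t => by ring_nf]
    exact dlem _ _ _ _ (mul_ne_zero hq1 hq2) hp2
  -- partials of phi3
  have e31 : pdq1 (phi3 b) (q1, p1, q2, p2) = -1 / ((p1 * q2) * q1 ^ 2) := by
    simp only [pdq1, phi3]
    rw [show (fun t => (1 + b * t) / (t * p1 * q2))
        = (fun t => (1 + b * t) / ((p1 * q2) * t)) from funext fun t => by ring_nf]
    exact dlem _ _ _ _ (mul_ne_zero hp1 hq2) hq1
  have e32 : pdp1 (phi3 b) (q1, p1, q2, p2) = -(1 + b * q1) / ((q1 * q2) * p1 ^ 2) := by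
    simp only [pdp1, phi3]
    rw [show (fun t => (1 + b * q1) / (q1 * t * q2))
        = (fun t => ((1 + b * q1) + 0 * t) / ((q1 * q2) * t)) from funext fun t => by ring_nf]
    exact dlem _ _ _ _ (mul_ne_zero hq1 hq2) hp1
  have e33 : pdq2 (phi3 b) (q1, p1, q2, p2) = -(1 + b * q1) / ((q1 * p1) * q2 ^ 2) := by
    simp only [pdq2, phi3]
    rw [show (fun t => (1 + b * q1) / (q1 * p1 * t))
        = (fun t => ((1 + b * q1) + 0 * t) / ((q1 * p1) * t)) from funext fun t => by ring_nf]
    exact dlem _ _ _ _ (mul_ne_zero hq1 hp1) hq2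
  have e34 : pdp2 (phi3 b) (q1, p1, q2, p2) = 0 := by
    simp only [pdp2, phi3]; exact deriv_const _ _
  -- partials of phi2
  have e21 : pdq1 phi2 (q1, p1, q2, p2) = 0 := by
    simp only [pdq1, phi2]; exact deriv_const _ _
  have e22 : pdp1 phi2 (q1, p1, q2, p2) = 0 := by
    simp only [pdp1, phi2]; exact deriv_const _ _
  have e23 : pdq2 phi2 (q1, p1, q2, p2) = 1 := by
    simp only [pdq2, phi2]; exact deriv_id _
  have e24 : pdp2 phi2 (q1, p1, q2, p2) = 0 := by
    simp only [pdp2, phi2]; exact deriv_const _ _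
  -- partials of phi4
  have e41 : pdq1 phi4 (q1, p1, q2, p2) = 1 := by
    simp only [pdq1, phi4]; exact deriv_id _
  have e42 : pdp1 phi4 (q1, p1, q2, p2) = 0 := by
    simp only [pdp1, phi4]; exact deriv_const _ _
  have e43 : pdq2 phi4 (q1, p1, q2, p2) = 0 := by
    simp only [pdq2, phi4]; exact deriv_const _ _
  have e44 : pdp2 phi4 (q1, p1, q2, p2) = 0 := by
    simp only [pdp2, phi4]; exact deriv_const _ _
  refine ⟨?_, ?_, ?_, ?_, ?_, ?_⟩ <;>
    simp only [pbracket, phi1, phi2, phi3, phi4,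
      e11, e12, e13, e14, e21, e22, e23, e24, e31, e32, e33, e34, e41, e42, e43, e44] <;>
    field_simp <;> ring
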